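/- Let L be a finite lattice and let L' be the lattice obtained from L by replacing an element x₀ of L by a finite bounded chain C. If L is 0-distributive, then L' is 0-distributive; if L is 1-distributive, then L' is 1-distributive. -/
import Mathlib


/-- The order on the poset `L'` obtained from a lattice `L` by replacing the
element `x₀` by the chain `C`: elements of `L \ {x₀}` compare as in `L`, elements
of `C` compare as in `C`, and for `a ∈ L \ {x₀}` and `c ∈ C`, `a ≤ c` iff
`a ≤ x₀` in `L` and `c ≤ a` iff `x₀ ≤ a` in `L`. -/
def chainReplLe {L C : Type*} [Lattice L] [LinearOrder C] (x₀ : L) :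
    ({a : L // a ≠ x₀} ⊕ C) → ({a : L // a ≠ x₀} ⊕ C) → Prop
  | Sum.inl a, Sum.inl b => a.1 ≤ b.1
  | Sum.inl a, Sum.inr _ => a.1 ≤ x₀
  | Sum.inr _, Sum.inl b => x₀ ≤ b.1
  | Sum.inr c, Sum.inr d => c ≤ d


section Helpers
variable {L C : Type*} [Lattice L] [LinearOrder C] {x₀ : L}

def crPi (x₀ : L) : ({a : L // a ≠ x₀} ⊕ C) → L := Sum.elim Subtype.val fun _ => x₀

lemma crPi_mono {x y : {a : L // a ≠ x₀} ⊕ C} (h : chainReplLe x₀ x y) :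
    crPi x₀ x ≤ crPi x₀ y := by
  cases x <;> cases y <;> first | exact h | exact le_refl _

lemma cr_inl_le {w : {a : L // a ≠ x₀}} {y : {a : L // a ≠ x₀} ⊕ C}
    (h : w.1 ≤ crPi x₀ y) : chainReplLe x₀ (Sum.inl w) y := by
  cases y <;> exact h

lemma cr_le_inl {w : {a : L // a ≠ x₀}} {y : {a : L // a ≠ x₀} ⊕ C}
    (h : crPi x₀ y ≤ w.1) : chainReplLe x₀ y (Sum.inl w) := by
  cases y <;> exact h

lemma cr_inr_bot_le [OrderBot C] {y : {a : L // a ≠ x₀} ⊕ C}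
    (h : x₀ ≤ crPi x₀ y) : chainReplLe x₀ (Sum.inr (⊥ : C)) y := by
  cases y with
  | inl b => exact h
  | inr d => exact bot_le

lemma cr_le_inr_top [OrderTop C] {y : {a : L // a ≠ x₀} ⊕ C}
    (h : crPi x₀ y ≤ x₀) : chainReplLe x₀ y (Sum.inr (⊤ : C)) := by
  cases y with
  | inl b => exact h
  | inr d => exact le_top

end Helpers

/-- Let `L` be a finite bounded lattice and let `L'` be the lattice
obtained from `L` by replacing an element `x₀` by a finite bounded chain `C`.
If `L` is 0-distributive then `L'` is 0-distributive, and if `L` is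
1-distributive then `L'` is 1-distributive.  In `L'` this is stated relationally:
`b0` is the least (resp. `t0` the greatest) element of `L'`, `s` is a least upper
bound (resp. `m` a greatest lower bound) of `b` and `c`, and "`u ∧ v = 0`"
(resp. "`u ∨ v = 1`") means that the only common lower (resp. upper) bound of
`u, v` is `b0` (resp. `t0`). -/
theorem stmt5 {L C : Type*} [Fintype L] [Lattice L] [BoundedOrder L]
    [Fintype C] [LinearOrder C] [BoundedOrder C] (x₀ : L) :
    -- 0-distributivity is preserved
    ((∀ a b c : L, a ⊓ b = ⊥ → a ⊓ c = ⊥ → a ⊓ (b ⊔ c) = ⊥) →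
      ∀ b0 : {a : L // a ≠ x₀} ⊕ C, (∀ x, chainReplLe x₀ b0 x) →
      ∀ a b c s,
        (chainReplLe x₀ b s ∧ chainReplLe x₀ c s ∧
          ∀ u, chainReplLe x₀ b u → chainReplLe x₀ c u → chainReplLe x₀ s u) →
        (∀ z, chainReplLe x₀ z a → chainReplLe x₀ z b → z = b0) →
        (∀ z, chainReplLe x₀ z a → chainReplLe x₀ z c → z = b0) →
        (∀ z, chainReplLe x₀ z a → chainReplLe x₀ z s → z = b0)) ∧
    -- 1-distributivity is preserved
    ((∀ a b c : L, a ⊔ b = ⊤ → a ⊔ c = ⊤ → a ⊔ (b ⊓ c) = ⊤) →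
      ∀ t0 : {a : L // a ≠ x₀} ⊕ C, (∀ x, chainReplLe x₀ x t0) →
      ∀ a b c m,
        (chainReplLe x₀ m b ∧ chainReplLe x₀ m c ∧
          ∀ u, chainReplLe x₀ u b → chainReplLe x₀ u c → chainReplLe x₀ u m) →
        (∀ z, chainReplLe x₀ a z → chainReplLe x₀ b z → z = t0) →
        (∀ z, chainReplLe x₀ a z → chainReplLe x₀ c z → z = t0) →
        (∀ z, chainReplLe x₀ a z → chainReplLe x₀ m z → z = t0)) := by
  constructor
  · -- 0-distributivity
    intro hL b0 hb0 a b c s ⟨hbs, hcs, hlub⟩ hab hac z hza hzs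
    -- the bottom of L' maps to ⊥
    have hb0bot : crPi x₀ b0 = ⊥ := by
      refine le_antisymm ?_ bot_le
      by_cases h : (⊥ : L) = x₀
      · have h1 : crPi x₀ b0 ≤ x₀ := crPi_mono (hb0 (Sum.inr (⊥ : C)))
        exact h1.trans h.symm.le
      · exact crPi_mono (hb0 (Sum.inl ⟨⊥, h⟩))
    -- disjointness transfers to L
    have key : ∀ u v : {a : L // a ≠ x₀} ⊕ C,
        (∀ z, chainReplLe x₀ z u → chainReplLe x₀ z v → z = b0) →
        crPi x₀ u ⊓ crPi x₀ v = ⊥ := by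
      intro u v h
      rcases eq_or_ne (crPi x₀ u ⊓ crPi x₀ v) x₀ with he | hne
      · have h1 := h (Sum.inr (⊥ : C)) (cr_inr_bot_le (he.symm.le.trans inf_le_left))
          (cr_inr_bot_le (he.symm.le.trans inf_le_right))
        have h2 : crPi x₀ (Sum.inr (⊥ : C) : {a : L // a ≠ x₀} ⊕ C) = ⊥ :=
          (congrArg (crPi x₀) h1).trans hb0bot
        exact he.trans h2
      · have h1 := h (Sum.inl ⟨_, hne⟩) (cr_inl_le inf_le_left) (cr_inl_le inf_le_right)
        exact (congrArg (crPi x₀) h1).trans hb0bot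
    -- s maps below the join
    have hpis : crPi x₀ s ≤ crPi x₀ b ⊔ crPi x₀ c := by
      rcases eq_or_ne (crPi x₀ b ⊔ crPi x₀ c) x₀ with he | hne
      · have h1 := hlub (Sum.inr (⊤ : C)) (cr_le_inr_top (le_sup_left.trans he.le))
          (cr_le_inr_top (le_sup_right.trans he.le))
        exact (crPi_mono h1).trans he.ge
      · exact crPi_mono (hlub (Sum.inl ⟨_, hne⟩) (cr_le_inl le_sup_left)
          (cr_le_inl le_sup_right))
    have hz : crPi x₀ z = ⊥ :=
      le_bot_iff.mp ((le_inf (crPi_mono hza) ((crPi_mono hzs).trans hpis)).trans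
        (hL _ _ _ (key a b hab) (key a c hac)).le)
    -- conclude
    cases z with
    | inl w =>
      cases b0 with
      | inl a0 => exact congrArg Sum.inl (Subtype.ext (hz.trans hb0bot.symm))
      | inr c0 => exact absurd (hz.trans hb0bot.symm) w.2
    | inr d =>
      cases b0 with
      | inl a0 => exact absurd (hb0bot.trans hz.symm) a0.2
      | inr c0 =>
        -- here x₀ = ⊥
        have hx0 : x₀ = ⊥ := hz
        cases b with
        | inl b1 => exact hab _ hza (show x₀ ≤ b1.1 from hx0.le.trans bot_le)
        | inr cb =>
          cases c with
          | inl c1 => exact hac _ hza (show x₀ ≤ c1.1 from hx0.le.trans bot_le)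
          | inr cc =>
            cases s with
            | inl w =>
              have : w.1 ≤ x₀ := hpis.trans (sup_le le_rfl le_rfl)
              exact absurd (le_antisymm this (hx0.le.trans bot_le)) w.2
            | inr cs =>
              have h1 : cs ≤ cb ⊔ cc :=
                hlub (Sum.inr (cb ⊔ cc)) (le_sup_left) (le_sup_right)
              have h2 : d ≤ cb ⊔ cc := le_trans hzs h1
              rcases le_sup_iff.mp h2 with h3 | h3
              · exact hab _ hza h3
              · exact hac _ hza h3
  · -- 1-distributivity
    intro hL t0 ht0 a b c m ⟨hmb, hmc, hglb⟩ hab hac z hza hzm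
    have ht0top : crPi x₀ t0 = ⊤ := by
      refine le_antisymm le_top ?_
      by_cases h : (⊤ : L) = x₀
      · have h1 : x₀ ≤ crPi x₀ t0 := crPi_mono (ht0 (Sum.inr (⊤ : C)))
        exact h.le.trans h1
      · exact crPi_mono (ht0 (Sum.inl ⟨⊤, h⟩))
    have key : ∀ u v : {a : L // a ≠ x₀} ⊕ C,
        (∀ z, chainReplLe x₀ u z → chainReplLe x₀ v z → z = t0) →
        crPi x₀ u ⊔ crPi x₀ v = ⊤ := by
      intro u v h
      rcases eq_or_ne (crPi x₀ u ⊔ crPi x₀ v) x₀ with he | hne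
      · have h1 := h (Sum.inr (⊤ : C)) (cr_le_inr_top (le_sup_left.trans he.le))
          (cr_le_inr_top (le_sup_right.trans he.le))
        have h2 : crPi x₀ (Sum.inr (⊤ : C) : {a : L // a ≠ x₀} ⊕ C) = ⊤ :=
          (congrArg (crPi x₀) h1).trans ht0top
        exact he.trans h2
      · have h1 := h (Sum.inl ⟨_, hne⟩) (cr_le_inl le_sup_left) (cr_le_inl le_sup_right)
        exact (congrArg (crPi x₀) h1).trans ht0top
    have hpim : crPi x₀ b ⊓ crPi x₀ c ≤ crPi x₀ m := by
      rcases eq_or_ne (crPi x₀ b ⊓ crPi x₀ c) x₀ with he | hne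
      · have h1 := hglb (Sum.inr (⊥ : C)) (cr_inr_bot_le (he.symm.le.trans inf_le_left))
          (cr_inr_bot_le (he.symm.le.trans inf_le_right))
        exact he.le.trans (crPi_mono h1)
      · exact crPi_mono (hglb (Sum.inl ⟨_, hne⟩) (cr_inl_le inf_le_left)
          (cr_inl_le inf_le_right))
    have hz : crPi x₀ z = ⊤ :=
      top_le_iff.mp ((hL _ _ _ (key a b hab) (key a c hac)).ge.trans
        (sup_le (crPi_mono hza) (hpim.trans (crPi_mono hzm))))
    cases z with
    | inl w =>
      cases t0 with
      | inl a0 => exact congrArg Sum.inl (Subtype.ext (hz.trans ht0top.symm))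
      | inr c0 => exact absurd (hz.trans ht0top.symm) w.2
    | inr d =>
      cases t0 with
      | inl a0 => exact absurd (ht0top.trans hz.symm) a0.2
      | inr c0 =>
        have hx0 : x₀ = ⊤ := hz
        cases b with
        | inl b1 => exact hab _ hza (show b1.1 ≤ x₀ from le_top.trans hx0.ge)
        | inr cb =>
          cases c with
          | inl c1 => exact hac _ hza (show c1.1 ≤ x₀ from le_top.trans hx0.ge)
          | inr cc =>
            cases m with
            | inl w =>
              have : x₀ ≤ w.1 := (le_inf le_rfl le_rfl).trans hpim
              exact absurd (le_antisymm (le_top.trans hx0.ge) this) w.2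
            | inr cm =>
              have h1 : cb ⊓ cc ≤ cm :=
                hglb (Sum.inr (cb ⊓ cc)) inf_le_left inf_le_right
              have h2 : cb ⊓ cc ≤ d := h1.trans hzm
              rcases inf_le_iff.mp h2 with h3 | h3
              · exact hab _ hza h3
              · exact hac _ hza h3
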